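/- Fix k ≥ 1, q ∈ [1,k], j ∈ [1,q] with gcd(j,q) = 1, and w ∈ [1, f] where f = ⌊k/q⌋ and m = k mod q, M = m+1. For r ∈ [1, q-1] define t(r) = |{a ∈ [0,m] : (a*j mod q) < (r*j mod q)}| and c(r) = -1 - w + (r*j mod q)*f + t(r). Then the integers c(1), ..., c(q-1) are distinct and all lie in the interval [0, k - f - 1]. -/

import Mathlib

theorem stmt_13 (k q j w : ℕ) (hk : 1 ≤ k) (hq : 1 ≤ q ∧ q ≤ k)
    (hj : 1 ≤ j ∧ j ≤ q) (hgcd : Nat.gcd j q = 1)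
    (f m M : ℕ) (hf : f = k / q) (hm : m = k % q) (hM : M = m + 1)
    (hw : 1 ≤ w ∧ w ≤ f)
    (t : ℕ → ℕ)
    (ht : ∀ r, t r = ((Finset.Icc 0 m).filter (fun a => (a * j) % q < (r * j) % q)).card)
    (c : ℕ → ℤ)
    (hc : ∀ r, c r = -1 - (w : ℤ) + ((r * j) % q : ℕ) * f + t r) :
    Set.InjOn c (Set.Icc 1 (q - 1)) ∧
    ∀ r ∈ Finset.Icc 1 (q - 1), 0 ≤ c r ∧ c r ≤ (k : ℤ) - f - 1 := by
  obtain ⟨hq1, hqk⟩ := hq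
  obtain ⟨hw1, hwf⟩ := hw
  have hq0 : 0 < q := hq1
  have hf1 : 1 ≤ f := by rw [hf]; exact (Nat.one_le_div_iff hq0).mpr hqk
  have hk_eq : q * f + m = k := by rw [hf, hm]; exact Nat.div_add_mod k q
  have hρpos : ∀ r, 1 ≤ r → r ≤ q - 1 → 1 ≤ (r * j) % q := by
    intro r hr1 hr2
    rcases Nat.eq_zero_or_pos ((r * j) % q) with h0 | h
    · exfalso
      have hdvd : q ∣ r * j := Nat.dvd_of_mod_eq_zero h0
      have hco : Nat.Coprime q j := Nat.coprime_comm.mp hgcd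
      have hqr : q ∣ r := hco.dvd_of_dvd_mul_right hdvd
      have := Nat.le_of_dvd (lt_of_lt_of_le Nat.zero_lt_one hr1) hqr
      omega
    · exact h
  have hρlt : ∀ r : ℕ, (r * j) % q < q := fun r => Nat.mod_lt _ hq0
  have ht1 : ∀ r, 1 ≤ (r * j) % q → 1 ≤ t r := by
    intro r h
    rw [ht]
    have h0 : (0 : ℕ) ∈ (Finset.Icc 0 m).filter (fun a => (a * j) % q < (r * j) % q) := by
      simp only [Finset.mem_filter, Finset.mem_Icc]
      constructor
      · omega
      · simp only [zero_mul, Nat.zero_mod]; exact h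
    exact Finset.card_pos.mpr ⟨0, h0⟩
  have htle : ∀ r, t r ≤ m + 1 := by
    intro r; rw [ht]
    calc ((Finset.Icc 0 m).filter _).card ≤ (Finset.Icc 0 m).card :=
          Finset.card_filter_le _ _
      _ = m + 1 := by simp
  have htmono : ∀ r1 r2, (r1 * j) % q ≤ (r2 * j) % q → t r1 ≤ t r2 := by
    intro r1 r2 h
    rw [ht, ht]
    apply Finset.card_le_card
    intro a ha
    simp only [Finset.mem_filter, Finset.mem_Icc] at ha ⊢
    omega
  have hmono : ∀ r1 r2, (r1 * j) % q < (r2 * j) % q → c r1 < c r2 := by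
    intro r1 r2 h
    rw [hc, hc]
    have h1 := htmono r1 r2 h.le
    have h2 : ((r1 * j) % q + 1) * f ≤ ((r2 * j) % q) * f := Nat.mul_le_mul_right f h
    have h2' : (((r1 * j) % q : ℕ) : ℤ) * f + f ≤ (((r2 * j) % q : ℕ) : ℤ) * f := by
      have := Int.ofNat_le.mpr h2
      push_cast at this ⊢
      linarith
    have h1' : ((t r1 : ℤ)) ≤ t r2 := Int.ofNat_le.mpr h1
    have hf1' : (1 : ℤ) ≤ f := Int.ofNat_le.mpr hf1
    linarith
  have hρinj : ∀ r1 ∈ Set.Icc 1 (q - 1), ∀ r2 ∈ Set.Icc 1 (q - 1),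
      (r1 * j) % q = (r2 * j) % q → r1 = r2 := by
    intro r1 hr1 r2 hr2 heq
    have hmod : r1 * j ≡ r2 * j [MOD q] := heq
    have hmod2 : r1 ≡ r2 [MOD q] := hmod.cancel_right_of_coprime (by rw [Nat.gcd_comm]; exact hgcd)
    have h1 : r1 % q = r1 := Nat.mod_eq_of_lt (by have := hr1.2; omega)
    have h2 : r2 % q = r2 := Nat.mod_eq_of_lt (by have := hr2.2; omega)
    unfold Nat.ModEq at hmod2
    omega
  constructor
  · intro r1 hr1 r2 hr2 hceq
    rcases lt_trichotomy ((r1 * j) % q) ((r2 * j) % q) with h | h | h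
    · exact absurd hceq (ne_of_lt (hmono r1 r2 h))
    · exact hρinj r1 hr1 r2 hr2 h
    · exact absurd hceq.symm (ne_of_lt (hmono r2 r1 h))
  · intro r hr
    rw [Finset.mem_Icc] at hr
    have hρ1 : 1 ≤ (r * j) % q := hρpos r hr.1 hr.2
    have hρ2 : (r * j) % q < q := hρlt r
    have ht1' : 1 ≤ t r := ht1 r hρ1
    have htle' : t r ≤ m + 1 := htle r
    have hlow : f ≤ ((r * j) % q) * f := Nat.le_mul_of_pos_left f hρ1
    have hhigh : ((r * j) % q + 1) * f ≤ q * f := Nat.mul_le_mul_right f hρ2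
    rw [hc]
    have hlow' : (f : ℤ) ≤ (((r * j) % q : ℕ) : ℤ) * f := by exact_mod_cast hlow
    have hhigh' : (((r * j) % q : ℕ) : ℤ) * f + f ≤ (q : ℤ) * f := by
      have := Int.ofNat_le.mpr hhigh
      push_cast at this ⊢
      linarith
    have hk' : (q : ℤ) * f + m = k := by exact_mod_cast hk_eq
    have ht1'' : (1 : ℤ) ≤ t r := Int.ofNat_le.mpr ht1'
    have htle'' : (t r : ℤ) ≤ m + 1 := by exact_mod_cast htle'
    have hw1' : (1 : ℤ) ≤ w := Int.ofNat_le.mpr hw1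
    have hwf' : (w : ℤ) ≤ f := Int.ofNat_le.mpr hwf
    constructor <;> linarith
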